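/- arXiv:1705.01699 — 2 statements merged into one kernel-verified Lean document; each statement's English description precedes it below -/
import Mathlib

section
/- Let f : ℝ² → [0,∞) be a bounded probability density, f_ξ(s) = ξ^{−2} f(s/ξ), let A ⊂ ℝ² be measurable with finite measure |A|, and fix λ, m̄ > 0. Then lim_{ξ→∞} exp( −λ ∫_{ℝ²} ( 1 − exp( −m̄ ∫_A f_ξ(y − z) dy ) ) dz ) = exp( −λ m̄ |A| ). -/
open MeasureTheory

/-- Void probability convergence: the void probability of a Neyman–Scott
cluster process with offspring density f_ξ(s) = ξ⁻² f(s/ξ) converges, as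
ξ → ∞, to the void probability exp(−λ m̄ |A|) of a homogeneous PPP of
intensity λ m̄. -/
theorem void_probability_limit
    (f : EuclideanSpace ℝ (Fin 2) → ℝ)
    (hf : Measurable f) (hf0 : ∀ s, 0 ≤ f s) (hf1 : ∫ s, f s = 1)
    (hbdd : BddAbove (Set.range f))
    (A : Set (EuclideanSpace ℝ (Fin 2))) (hA : MeasurableSet A)
    (hAfin : volume A < ⊤) (lam m : ℝ) (hlam : 0 < lam) (hm : 0 < m) :
    Filter.Tendsto
      (fun ξ : ℝ =>
        Real.exp (-lam * ∫ z : EuclideanSpace ℝ (Fin 2),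
          (1 - Real.exp (-m * ∫ y in A, ξ⁻¹ ^ 2 * f (ξ⁻¹ • (y - z))))))
      Filter.atTop
      (nhds (Real.exp (-lam * m * (volume A).toReal))) := by
  classical
  have hfInt : Integrable f := by
    by_contra h
    rw [integral_undef h] at hf1
    norm_num at hf1
  obtain ⟨C, hC⟩ : ∃ C : ℝ, ∀ s, f s ≤ C :=
    ⟨sSup (Set.range f), fun s => le_csSup hbdd ⟨s, rfl⟩⟩
  have hC0 : 0 ≤ C := (hf0 0).trans (hC 0)
  set α := (volume A).toReal with hαdef
  have hα0 : 0 ≤ α := ENNReal.toReal_nonneg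
  set g : ℝ → EuclideanSpace ℝ (Fin 2) → ℝ :=
    fun ξ z => ∫ y in A, ξ⁻¹ ^ 2 * f (ξ⁻¹ • (y - z)) with hgdef
  -- facts about g for positive ξ
  have key : ∀ ξ : ℝ, 0 < ξ →
      Integrable (g ξ) ∧ ((∫ z, g ξ z) = α) ∧ (∀ z, 0 ≤ g ξ z) ∧
      (∀ z, g ξ z ≤ ξ⁻¹ ^ 2 * C * α) ∧ Measurable (g ξ) := by
    intro ξ hξ
    have hξinv : (ξ : ℝ)⁻¹ ≠ 0 := by positivity
    have hFmeas : Measurable (fun p : EuclideanSpace ℝ (Fin 2) × EuclideanSpace ℝ (Fin 2) =>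
        ξ⁻¹ ^ 2 * f (ξ⁻¹ • (p.2 - p.1))) :=
      (hf.comp ((measurable_snd.sub measurable_fst).const_smul ξ⁻¹)).const_mul _
    set L : EuclideanSpace ℝ (Fin 2) → ENNReal :=
      fun z => ∫⁻ y in A, ENNReal.ofReal (ξ⁻¹ ^ 2 * f (ξ⁻¹ • (y - z))) with hLdef
    have hLmeas : Measurable L :=
      (ENNReal.measurable_ofReal.comp hFmeas).lintegral_prod_right'
    -- Integrability of the translated/scaled density, in both variables
    have hcomp : Integrable (fun w : EuclideanSpace ℝ (Fin 2) => f (ξ⁻¹ • w)) :=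
      (integrable_comp_smul_iff volume f hξinv).2 hfInt
    have hintz : ∀ y, Integrable
        (fun z : EuclideanSpace ℝ (Fin 2) => ξ⁻¹ ^ 2 * f (ξ⁻¹ • (y - z))) := fun y =>
      (hcomp.comp_sub_left y).const_mul _
    have hinty : ∀ z, Integrable
        (fun y : EuclideanSpace ℝ (Fin 2) => ξ⁻¹ ^ 2 * f (ξ⁻¹ • (y - z))) := fun z =>
      (hcomp.comp_sub_right z).const_mul _
    -- change of variables: each translated/scaled density integrates to 1
    have hone : ∀ y, (∫ z : EuclideanSpace ℝ (Fin 2), ξ⁻¹ ^ 2 * f (ξ⁻¹ • (y - z))) = 1 := by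
      intro y
      rw [integral_const_mul]
      have h1 : ∫ z : EuclideanSpace ℝ (Fin 2), f (ξ⁻¹ • (y - z)) =
          ∫ z : EuclideanSpace ℝ (Fin 2), f (ξ⁻¹ • z) :=
        integral_sub_left_eq_self (fun w => f (ξ⁻¹ • w)) volume y
      rw [h1, Measure.integral_comp_smul volume f ξ⁻¹, hf1]
      have h2 : Module.finrank ℝ (EuclideanSpace ℝ (Fin 2)) = 2 := finrank_euclideanSpace_fin
      rw [h2, smul_eq_mul, abs_of_nonneg (by positivity)]
      field_simp
    have hinner : ∀ y, (∫⁻ z, ENNReal.ofReal (ξ⁻¹ ^ 2 * f (ξ⁻¹ • (y - z)))) = 1 := by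
      intro y
      rw [← ofReal_integral_eq_lintegral_ofReal (hintz y)
        (Filter.Eventually.of_forall fun z => mul_nonneg (by positivity) (hf0 _))]
      rw [hone y, ENNReal.ofReal_one]
    have hLtot : ∫⁻ z, L z = volume A := by
      have hswap := lintegral_lintegral_swap (μ := (volume : Measure (EuclideanSpace ℝ (Fin 2))))
        (ν := volume.restrict A)
        (f := fun z y => ENNReal.ofReal (ξ⁻¹ ^ 2 * f (ξ⁻¹ • (y - z))))
        (ENNReal.measurable_ofReal.comp hFmeas).aemeasurable
      rw [hLdef]
      simp only []
      rw [hswap]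
      have : (∫⁻ y, ∫⁻ z, ENNReal.ofReal (ξ⁻¹ ^ 2 * f (ξ⁻¹ • (y - z))) ∂volume
          ∂(volume.restrict A)) = ∫⁻ _y, 1 ∂(volume.restrict A) :=
        lintegral_congr fun y => hinner y
      rw [this, lintegral_one, Measure.restrict_apply_univ]
    have hLne : ∫⁻ z, L z ≠ ⊤ := by rw [hLtot]; exact hAfin.ne
    have hgL : g ξ = fun z => (L z).toReal := by
      funext z
      exact integral_eq_lintegral_of_nonneg_ae
        (Filter.Eventually.of_forall fun y => mul_nonneg (by positivity) (hf0 _))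
        ((hinty z).aestronglyMeasurable.restrict)
    have hgmeas : Measurable (g ξ) := by
      rw [hgL]; exact hLmeas.ennreal_toReal
    have hgint : Integrable (g ξ) := by
      rw [hgL]; exact integrable_toReal_of_lintegral_ne_top hLmeas.aemeasurable hLne
    have hgsum : (∫ z, g ξ z) = α := by
      rw [hgL]
      rw [integral_toReal hLmeas.aemeasurable (ae_lt_top hLmeas hLne), hLtot]
    have hg0 : ∀ z, 0 ≤ g ξ z := fun z =>
      integral_nonneg fun y => mul_nonneg (by positivity) (hf0 _)
    haveI : IsFiniteMeasure (volume.restrict A) :=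
      ⟨by rwa [Measure.restrict_apply_univ]⟩
    have hgle : ∀ z, g ξ z ≤ ξ⁻¹ ^ 2 * C * α := by
      intro z
      have h1 : g ξ z ≤ ∫ _y in A, ξ⁻¹ ^ 2 * C := by
        refine integral_mono ((hinty z).restrict) (integrable_const _) fun y => ?_
        exact mul_le_mul_of_nonneg_left (hC _) (by positivity)
      have h2 : (∫ _y in A, ξ⁻¹ ^ 2 * C : ℝ) = α * (ξ⁻¹ ^ 2 * C) := by
        rw [setIntegral_const, smul_eq_mul, hαdef, measureReal_def]
      calc g ξ z ≤ α * (ξ⁻¹ ^ 2 * C) := h2 ▸ h1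
        _ = ξ⁻¹ ^ 2 * C * α := by ring
    exact ⟨hgint, hgsum, hg0, hgle, hgmeas⟩
  -- squeeze the integral of 1 - exp(-m g)
  have hIbounds : ∀ ξ : ℝ, 0 < ξ →
      Real.exp (-(m * (ξ⁻¹ ^ 2 * C * α))) * (m * α) ≤
        (∫ z, (1 - Real.exp (-m * g ξ z))) ∧
      (∫ z, (1 - Real.exp (-m * g ξ z))) ≤ m * α := by
    intro ξ hξ
    obtain ⟨hgint, hgsum, hg0, hgle, hgmeas⟩ := key ξ hξ
    set δ := ξ⁻¹ ^ 2 * C * α with hδdef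
    have hδ0 : 0 ≤ δ := by positivity
    have hneg : ∀ z, -m * g ξ z = -(m * g ξ z) := fun z => by ring
    have hu0 : ∀ z, 0 ≤ 1 - Real.exp (-m * g ξ z) := by
      intro z
      have : Real.exp (-m * g ξ z) ≤ 1 := by
        rw [← Real.exp_zero]
        exact Real.exp_le_exp.2 (by nlinarith [hg0 z])
      linarith
    have huup : ∀ z, 1 - Real.exp (-m * g ξ z) ≤ m * g ξ z := by
      intro z
      rw [hneg z]
      nlinarith [Real.add_one_le_exp (-(m * g ξ z))]
    have hulow : ∀ z, Real.exp (-(m * δ)) * (m * g ξ z) ≤ 1 - Real.exp (-m * g ξ z) := by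
      intro z
      rw [hneg z]
      set x := m * g ξ z with hxdef
      have hx0 : 0 ≤ x := mul_nonneg hm.le (hg0 z)
      have h1 : x * Real.exp (-x) ≤ 1 - Real.exp (-x) := by
        have ha := Real.add_one_le_exp x
        have hp := Real.exp_pos x
        have hip : 0 < (Real.exp x)⁻¹ := inv_pos.2 hp
        have he : Real.exp x * (Real.exp x)⁻¹ = 1 := mul_inv_cancel₀ (Real.exp_ne_zero x)
        rw [Real.exp_neg]
        nlinarith
      have h2 : Real.exp (-(m * δ)) ≤ Real.exp (-x) := by
        apply Real.exp_le_exp.2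
        have : x ≤ m * δ := by
          rw [hxdef]
          exact mul_le_mul_of_nonneg_left (hgle z) hm.le
        linarith
      calc Real.exp (-(m * δ)) * x ≤ Real.exp (-x) * x :=
            mul_le_mul_of_nonneg_right h2 hx0
        _ = x * Real.exp (-x) := by ring
        _ ≤ 1 - Real.exp (-x) := h1
    have huInt : Integrable (fun z => 1 - Real.exp (-m * g ξ z)) := by
      refine Integrable.mono' (hgint.const_mul m)
        ((measurable_const.sub
          (Real.measurable_exp.comp (hgmeas.const_mul (-m)))).aestronglyMeasurable)
        (Filter.Eventually.of_forall fun z => ?_)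
      rw [Real.norm_eq_abs, abs_of_nonneg (hu0 z)]
      exact huup z
    constructor
    · have hleft : (∫ z, Real.exp (-(m * δ)) * (m * g ξ z)) =
          Real.exp (-(m * δ)) * (m * α) := by
        have : (fun z => Real.exp (-(m * δ)) * (m * g ξ z)) =
            fun z => (Real.exp (-(m * δ)) * m) * g ξ z := by funext z; ring
        rw [this, integral_const_mul, hgsum]
        ring
      rw [← hleft]
      exact integral_mono ((hgint.const_mul m).const_mul _) huInt hulow
    · have hright : (∫ z, m * g ξ z) = m * α := by rw [integral_const_mul, hgsum]
      rw [← hright]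
      exact integral_mono huInt (hgint.const_mul m) huup
  -- the squeeze limit
  have hδlim : Filter.Tendsto (fun ξ : ℝ => ξ⁻¹ ^ 2 * C * α) Filter.atTop (nhds 0) := by
    have h1 : Filter.Tendsto (fun ξ : ℝ => ξ⁻¹) Filter.atTop (nhds 0) :=
      tendsto_inv_atTop_zero
    have h2 := (h1.pow 2)
    simpa using (h2.mul_const C).mul_const α
  have hlowlim : Filter.Tendsto
      (fun ξ : ℝ => Real.exp (-(m * (ξ⁻¹ ^ 2 * C * α))) * (m * α))
      Filter.atTop (nhds (m * α)) := by
    have h3 : Filter.Tendsto (fun ξ : ℝ => -(m * (ξ⁻¹ ^ 2 * C * α)))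
        Filter.atTop (nhds 0) := by
      simpa using (hδlim.const_mul m).neg
    have h4 := (Real.continuous_exp.tendsto 0).comp h3
    simpa using h4.mul_const (m * α)
  have hmain : Filter.Tendsto (fun ξ : ℝ => ∫ z, (1 - Real.exp (-m * g ξ z)))
      Filter.atTop (nhds (m * α)) := by
    refine tendsto_of_tendsto_of_tendsto_of_le_of_le' hlowlim tendsto_const_nhds ?_ ?_
    · filter_upwards [Filter.eventually_gt_atTop (0 : ℝ)] with ξ hξ
      exact (hIbounds ξ hξ).1
    · filter_upwards [Filter.eventually_gt_atTop (0 : ℝ)] with ξ hξ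
      exact (hIbounds ξ hξ).2
  have hfinal := (Real.continuous_exp.tendsto _).comp (hmain.const_mul (-lam))
  have heq : -lam * m * α = -lam * (m * α) := by ring
  rw [show (-lam * m * (volume A).toReal : ℝ) = -lam * (m * α) from heq]
  exact hfinal
end

section
/- Let N be Poisson with mean m̄ > 0, and conditional on N = n let Y_1, …, Y_n be i.i.d. points in ℝ² with density f. Condition on the size-biased cluster (i.e., replace the law of N by the size-biased pmf n p_n/m̄ on n ≥ 1, with one distinguished point removed uniformly). Then for measurable g : ℝ² → [0,1] and v : ℝ² → [0,1], the sum-product functional E[ Σ_{i=1}^{Ñ} g(Y_i) Π_{j≤Ñ, j≠i} v(Y_j) ] computed under the size-biased law Ñ ∼ n p_n/m̄ equals ∫_{ℝ²} g(x) f(x) dx · exp( −m̄ ∫_{ℝ²} (1 − v(y)) f(y) dy ) · ( m̄ ∫_{ℝ²} v(y) f(y) dy + 1 ). -/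
open MeasureTheory
open scoped NNReal ENNReal

lemma aux_integral_pi {α : Type*} [MeasurableSpace α] (μ : Measure α) [SigmaFinite μ]
    {n : ℕ} (h : Fin n → α → ℝ) :
    ∫ x : Fin n → α, ∏ i, h i (x i) ∂(Measure.pi fun _ => μ) = ∏ i, ∫ x, h i x ∂μ := by
  letI : MeasureSpace α := ⟨μ⟩
  haveI : SigmaFinite (volume : Measure α) := ‹SigmaFinite μ›
  exact MeasureTheory.integral_fintype_prod_eq_prod (fun i => h i)

lemma aux_integrable_pi {α : Type*} [MeasurableSpace α] (μ : Measure α) [SigmaFinite μ]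
    {n : ℕ} (h : Fin n → α → ℝ) (hint : ∀ i, Integrable (h i) μ) :
    Integrable (fun x : Fin n → α => ∏ i, h i (x i)) (Measure.pi fun _ => μ) := by
  letI : MeasureSpace α := ⟨μ⟩
  haveI : SigmaFinite (volume : Measure α) := ‹SigmaFinite μ›
  exact Integrable.fintype_prod_dep hint

lemma aux_shift (x : ℝ) :
    Summable (fun k : ℕ => ((k : ℝ) + 1) * x ^ k / k.factorial) ∧
    ∑' k : ℕ, ((k : ℝ) + 1) * x ^ k / k.factorial = Real.exp x * (x + 1) := by
  have hA : Summable (fun k : ℕ => x ^ k / k.factorial) := Real.summable_pow_div_factorial x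
  have hB : Summable (fun k : ℕ => (k : ℝ) * x ^ k / k.factorial) := by
    rw [← summable_nat_add_iff 1]
    have : (fun k : ℕ => ((k + 1 : ℕ) : ℝ) * x ^ (k + 1) / (k + 1).factorial)
        = fun k : ℕ => x * (x ^ k / k.factorial) := by
      funext k
      have hk : ((k.factorial : ℝ)) ≠ 0 := Nat.cast_ne_zero.2 k.factorial_ne_zero
      rw [Nat.factorial_succ]
      push_cast
      rw [pow_succ]
      field_simp
    rw [this]
    exact hA.mul_left x
  have hsum : Summable (fun k : ℕ => ((k : ℝ) + 1) * x ^ k / k.factorial) := by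
    have : (fun k : ℕ => ((k : ℝ) + 1) * x ^ k / k.factorial)
        = fun k : ℕ => (k : ℝ) * x ^ k / k.factorial + x ^ k / k.factorial := by
      funext k; ring
    rw [this]; exact hB.add hA
  refine ⟨hsum, ?_⟩
  have hexp : ∑' k : ℕ, x ^ k / k.factorial = Real.exp x := by
    rw [Real.exp_eq_exp_ℝ, NormedSpace.exp_eq_tsum_div]
  have hBval : ∑' k : ℕ, (k : ℝ) * x ^ k / k.factorial = x * Real.exp x := by
    rw [hB.tsum_eq_zero_add]
    have : (fun k : ℕ => ((k + 1 : ℕ) : ℝ) * x ^ (k + 1) / (k + 1).factorial)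
        = fun k : ℕ => x * (x ^ k / k.factorial) := by
      funext k
      have hk : ((k.factorial : ℝ)) ≠ 0 := Nat.cast_ne_zero.2 k.factorial_ne_zero
      rw [Nat.factorial_succ]; push_cast; rw [pow_succ]; field_simp
    simp only [this]
    rw [tsum_mul_left, hexp]
    simp
  have : (fun k : ℕ => ((k : ℝ) + 1) * x ^ k / k.factorial)
      = fun k : ℕ => (k : ℝ) * x ^ k / k.factorial + x ^ k / k.factorial := by
    funext k; ring
  rw [this, hB.tsum_add hA, hBval, hexp]
  ring

/-- Sum-product functional of the offspring process of a Neyman–Scott cluster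
under the size-biased law: with p_n the Poisson(m̄) pmf and the cluster size
distributed as n p_n/m̄ (the cluster conditioned to contain the removed typical
point), for i.i.d. points with density f,
E[Σᵢ g(Yᵢ) Π_{j≠i} v(Yⱼ)] = (∫ g f) exp(−m̄ ∫(1−v) f)(m̄ ∫ v f + 1). -/
theorem sizeBiased_cluster_sum_product
    (f g v : EuclideanSpace ℝ (Fin 2) → ℝ)
    (hf : Measurable f) (hf0 : ∀ y, 0 ≤ f y) (hf1 : ∫ y, f y = 1)
    (hg : Measurable g) (hv : Measurable v)
    (hg01 : ∀ y, g y ∈ Set.Icc (0 : ℝ) 1)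
    (hv01 : ∀ y, v y ∈ Set.Icc (0 : ℝ) 1)
    (m : ℝ) (hm : 0 < m) :
    (∑' n : ℕ, ((n : ℝ) * (Real.exp (-m) * m ^ n / n.factorial) / m) *
        ∫ y : Fin n → EuclideanSpace ℝ (Fin 2),
          (∑ i : Fin n, g (y i) * ∏ j ∈ Finset.univ.erase i, v (y j))
          ∂(Measure.pi fun _ =>
              volume.withDensity fun s => ENNReal.ofReal (f s)))
      = (∫ y, g y * f y) * Real.exp (-m * ∫ y, (1 - v y) * f y) *
          (m * (∫ y, v y * f y) + 1) := by
  set μ : Measure (EuclideanSpace ℝ (Fin 2)) :=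
    volume.withDensity fun s => ENNReal.ofReal (f s) with hμdef
  -- f is integrable
  have hfi : Integrable f := by
    by_contra h
    rw [integral_undef h] at hf1
    norm_num at hf1
  -- integrals against μ
  have key : ∀ w : EuclideanSpace ℝ (Fin 2) → ℝ, ∫ x, w x ∂μ = ∫ x, w x * f x := by
    intro w
    have hd : (fun s : EuclideanSpace ℝ (Fin 2) => ENNReal.ofReal (f s))
        = fun s => ((Real.toNNReal (f s) : ℝ≥0) : ENNReal) := rfl
    rw [hμdef, hd, integral_withDensity_eq_integral_smul hf.real_toNNReal w]
    congr 1
    funext x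
    rw [NNReal.smul_def, Real.coe_toNNReal _ (hf0 x), smul_eq_mul, mul_comm]
  have hprob : IsProbabilityMeasure μ := by
    constructor
    rw [hμdef, withDensity_apply _ MeasurableSet.univ, setLIntegral_univ,
      ← ofReal_integral_eq_lintegral_ofReal hfi (Filter.Eventually.of_forall hf0), hf1,
      ENNReal.ofReal_one]
  haveI := hprob
  set G : ℝ := ∫ y, g y * f y with hGdef
  set T : ℝ := ∫ y, v y * f y with hTdef
  have hGμ : ∫ x, g x ∂μ = G := key g
  have hTμ : ∫ x, v x ∂μ = T := key v
  -- integrability of bounded measurable functions wrt μ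
  have hint : ∀ w : EuclideanSpace ℝ (Fin 2) → ℝ, Measurable w →
      (∀ y, w y ∈ Set.Icc (0:ℝ) 1) → Integrable w μ := by
    intro w hw hw01
    refine (integrable_const (1:ℝ)).mono' hw.aestronglyMeasurable
      (Filter.Eventually.of_forall fun y => ?_)
    rw [Real.norm_eq_abs, abs_le]
    exact ⟨by linarith [(hw01 y).1], (hw01 y).2⟩
  have hgint : Integrable g μ := hint g hg hg01
  have hvint : Integrable v μ := hint v hv hv01
  -- the inner integral
  have hI : ∀ n : ℕ,
      (∫ y : Fin n → EuclideanSpace ℝ (Fin 2),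
          (∑ i : Fin n, g (y i) * ∏ j ∈ Finset.univ.erase i, v (y j))
        ∂(Measure.pi fun _ => μ)) = (n : ℝ) * G * T ^ (n - 1) := by
    intro n
    have hrw : ∀ i : Fin n,
        (fun y : Fin n → EuclideanSpace ℝ (Fin 2) =>
            g (y i) * ∏ j ∈ Finset.univ.erase i, v (y j))
        = fun y => ∏ j : Fin n, (fun j x => if j = i then g x else v x) j (y j) := by
      intro i
      funext y
      rw [← Finset.mul_prod_erase Finset.univ
        (fun j => (fun j x => if j = i then g x else v x) j (y j)) (Finset.mem_univ i)]
      simp only [eq_self_iff_true, if_true]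
      congr 1
      refine Finset.prod_congr rfl fun j hj => ?_
      rw [if_neg (Finset.ne_of_mem_erase hj)]
    have hterm : ∀ i : Fin n,
        Integrable (fun y : Fin n → EuclideanSpace ℝ (Fin 2) =>
            g (y i) * ∏ j ∈ Finset.univ.erase i, v (y j))
          (Measure.pi fun _ => μ) := by
      intro i
      rw [hrw i]
      refine aux_integrable_pi μ (fun j x => if j = i then g x else v x) fun j => ?_
      by_cases h : j = i <;> simp only [h, if_pos, if_true, if_false, if_neg, not_false_iff]
      · exact hgint
      · exact hvint
    rw [integral_finset_sum _ fun i _ => hterm i]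
    have : ∀ i : Fin n,
        (∫ y : Fin n → EuclideanSpace ℝ (Fin 2),
            g (y i) * ∏ j ∈ Finset.univ.erase i, v (y j)
          ∂(Measure.pi fun _ => μ)) = G * T ^ (n - 1) := by
      intro i
      rw [hrw i, aux_integral_pi μ (fun j x => if j = i then g x else v x)]
      rw [← Finset.mul_prod_erase Finset.univ
        (fun j => ∫ x, (fun j x => if j = i then g x else v x) j x ∂μ) (Finset.mem_univ i)]
      simp only [eq_self_iff_true, if_true]
      rw [hGμ]
      congr 1
      have hpc : ∀ j ∈ Finset.univ.erase i,
          (∫ x, (fun j x => if j = i then g x else v x) j x ∂μ) = ∫ x, v x ∂μ := by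
        intro j hj
        simp only [if_neg (Finset.ne_of_mem_erase hj)]
      rw [Finset.prod_congr rfl hpc, Finset.prod_const, hTμ, Finset.card_erase_of_mem (Finset.mem_univ i),
        Finset.card_univ, Fintype.card_fin]
    simp only [this]
    rw [Finset.sum_const, Finset.card_univ, Fintype.card_fin, nsmul_eq_mul]
    ring
  simp only [hI]
  -- series computation
  obtain ⟨hsum1, hval⟩ := aux_shift (m * T)
  set c : ℕ → ℝ := fun n =>
    (n : ℝ) * (Real.exp (-m) * m ^ n / n.factorial) / m * ((n : ℝ) * G * T ^ (n - 1)) with hcdef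
  have hcs : (fun k : ℕ => c (k + 1))
      = fun k : ℕ => (G * Real.exp (-m)) * (((k : ℝ) + 1) * (m * T) ^ k / k.factorial) := by
    funext k
    have hk : ((k.factorial : ℝ)) ≠ 0 := Nat.cast_ne_zero.2 k.factorial_ne_zero
    simp only [hcdef, Nat.succ_sub_one, Nat.factorial_succ]
    push_cast
    rw [pow_succ, mul_pow]
    field_simp
  have hc : Summable c := by
    rw [← summable_nat_add_iff 1]
    exact hcs ▸ hsum1.mul_left (G * Real.exp (-m))
  rw [hc.tsum_eq_zero_add]
  have hc0 : c 0 = 0 := by simp [hcdef]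
  rw [hc0, zero_add, hcs, tsum_mul_left, hval]
  -- right hand side
  have hvf : Integrable (fun y => v y * f y) := by
    refine hfi.mono ((hv.mul hf).aestronglyMeasurable) (Filter.Eventually.of_forall fun y => ?_)
    rw [Real.norm_eq_abs, Real.norm_eq_abs, abs_mul, abs_of_nonneg (hf0 y)]
    have h1 := (hv01 y).1
    have h2 := (hv01 y).2
    have hva : |v y| ≤ 1 := by rw [abs_le]; constructor <;> linarith
    nlinarith [hf0 y, abs_nonneg (v y)]
  have h1v : ∫ y, (1 - v y) * f y = 1 - T := by
    simp_rw [sub_mul, one_mul]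
    rw [integral_sub hfi hvf, hf1, hTdef]
  rw [h1v, show -m * (1 - T) = -m + m * T by ring, Real.exp_add]
  ring
end
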